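/- Let T be a finite set of Wang tiles and let σ_T be the two-dimensional substitution on the alphabet A = T × {→,↑,←,↓} defined as follows: σ_base((a,d)) = {[(0,0),(a,d)]} for every (a,d) ∈ A, and the concatenation rules are in bijection with the unordered dominoes {[(0,0),(a,d)],[u,(b,d')]}, u ∈ {(1,0),(−1,0),(0,1),(0,−1)}, such that the colors of the Wang tiles a and b agree on the shared edge when b is placed at position u relative to a, and exactly one of the two arrows points at the other cell (i.e., exactly one of 'd is the direction of u' and 'd' is the direction of −u' holds); the image vector of each such rule places the image of the pointing cell immediately to the left of the image of the pointed cell: σ_rule(pointing cell, pointed cell) = (1,0). Then T admits a valid tiling of a cycle if and only if σ_T is not consistent. -/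

import Mathlib

open scoped Classical

/-- A combinatorial substitution on alphabet `A` with vectors in `V`:
a base rule sending each letter to a pattern, together with a deterministic
finite set of concatenation rules.  `rule t t' u = some v` encodes the
concatenation rule `(t, t', u) ↦ v`. -/
structure Subst (A : Type*) (V : Type*) [AddCommGroup V] where
  /-- the base rule -/
  base : A → Finset (V × A)
  /-- the image of a letter is a pattern: its cells have distinct vectors -/
  basePat : ∀ t : A, ∀ c ∈ base t, ∀ c' ∈ base t, c.1 = c'.1 → c = c'
  /-- the concatenation rules, as a partial function -/
  rule : A → A → V → Option V
  /-- there are finitely many concatenation rules -/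
  finiteRules : {u : V | ∃ t t', rule t t' u ≠ none}.Finite
  /-- determinism: no two rules with left-hand sides `(t,t',u)` and `(t,t',-u)` -/
  det : ∀ t t' u, (rule t t' u).isSome → (rule t t' (-u)).isSome → u = -u

/-- A pattern is a finite set of cells with pairwise distinct vectors. -/
def IsPattern {V A : Type*} (P : Finset (V × A)) : Prop :=
  ∀ c ∈ P, ∀ c' ∈ P, c.1 = c'.1 → c = c'

namespace Subst

variable {A V : Type*} [AddCommGroup V]

/-- `σ_rule(c, c')`: the relative position of the images of the two cells
`c`, `c'`, when some concatenation rule applies to them. -/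
def ruleVec (σ : Subst A V) (c c' : V × A) : Option V :=
  match σ.rule c.2 c'.2 (c'.1 - c.1) with
  | some v => some v
  | none => (σ.rule c'.2 c.2 (c.1 - c'.1)).map (fun v => -v)

/-- The image vector `ω_σ(γ)` of a path `γ`. -/
def omega (σ : Subst A V) (γ : List (V × A)) : V :=
  ((γ.zip γ.tail).map (fun p => (σ.ruleVec p.1 p.2).getD 0)).sum

/-- A `C_σ`-path: a nonempty sequence of cells in which any two consecutive
cells form a translated copy of a starting pattern of `σ`, and any two cells
with the same vector are equal. -/
def IsPath (σ : Subst A V) (γ : List (V × A)) : Prop :=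
  γ ≠ [] ∧ γ.Chain' (fun c c' => (σ.ruleVec c c').isSome) ∧
    ∀ c ∈ γ, ∀ c' ∈ γ, c.1 = c'.1 → c = c'

/-- A `C_σ`-path of the pattern `P`. -/
def IsPathOf (σ : Subst A V) (P : Finset (V × A)) (γ : List (V × A)) : Prop :=
  σ.IsPath γ ∧ ∀ c ∈ γ, c ∈ P

/-- A `C_σ`-loop of the pattern `P`. -/
def IsLoopOf (σ : Subst A V) (P : Finset (V × A)) (γ : List (V × A)) : Prop :=
  σ.IsPathOf P γ ∧ γ.head? = γ.getLast?

/-- `P` is `C_σ`-covered: any two of its cells are joined by a `C_σ`-path of `P`. -/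
def Covered (σ : Subst A V) (P : Finset (V × A)) : Prop :=
  ∀ c ∈ P, ∀ c' ∈ P,
    ∃ γ, σ.IsPathOf P γ ∧ γ.head? = some c ∧ γ.getLast? = some c'

/-- `σ` is consistent on `P`: any two `C_σ`-paths of `P` with the same first
and last cells have the same image vector. -/
def ConsistentOn (σ : Subst A V) (P : Finset (V × A)) : Prop :=
  ∀ γ γ' : List (V × A), σ.IsPathOf P γ → σ.IsPathOf P γ' →
    γ.head? = γ'.head? → γ.getLast? = γ'.getLast? → σ.omega γ = σ.omega γ'

/-- `σ` is consistent: it is consistent on every `C_σ`-covered pattern. -/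
def Consistent (σ : Subst A V) : Prop :=
  ∀ P : Finset (V × A), IsPattern P → σ.Covered P → σ.ConsistentOn P

/-- The support of the image of a letter. -/
noncomputable def supp (σ : Subst A V) (t : A) : Finset V :=
  (σ.base t).image Prod.fst

/-- `σ` is non-overlapping on `P`: the images of two distinct cells of `P`
joined by a `C_σ`-path of `P` have disjoint supports. -/
def NonOverlappingOn (σ : Subst A V) (P : Finset (V × A)) : Prop :=
  ∀ c ∈ P, ∀ c' ∈ P, c ≠ c' → ∀ γ, σ.IsPathOf P γ →
    γ.head? = some c → γ.getLast? = some c' →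
    ∀ b ∈ σ.supp c'.2, σ.omega γ + b ∉ σ.supp c.2

/-- `σ` is non-overlapping: it is non-overlapping on every `C_σ`-covered pattern. -/
def NonOverlapping (σ : Subst A V) : Prop :=
  ∀ P : Finset (V × A), IsPattern P → σ.Covered P → σ.NonOverlappingOn P

end Subst

/-- A Wang tile: a unit square with a color on each of its four edges. -/
structure WangTile (C : Type*) where
  north : C
  south : C
  east : C
  west : C

/-- The four arrow decorations. -/
inductive Dir : Type where
  | right : Dir
  | up : Dir
  | left : Dir
  | down : Dir
deriving DecidableEq

instance : Fintype Dir :=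
  ⟨{Dir.right, Dir.up, Dir.left, Dir.down}, by intro x; cases x <;> simp⟩

/-- The unit vector associated with a direction. -/
def dirVec : Dir → ℤ × ℤ
  | .right => (1, 0)
  | .up => (0, 1)
  | .left => (-1, 0)
  | .down => (0, -1)

/-- The colors of the Wang tiles `a` and `b` agree on the shared edge when
`b` is placed at position `u` relative to `a` (in particular `u` is a unit
vector). -/
def WangMatch {C : Type*} (a b : WangTile C) (u : ℤ × ℤ) : Prop :=
  (u = (1, 0) ∧ a.east = b.west) ∨ (u = (-1, 0) ∧ a.west = b.east) ∨
  (u = (0, 1) ∧ a.north = b.south) ∨ (u = (0, -1) ∧ a.south = b.north)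

/-- `T` admits a valid tiling of a cycle: a nontrivial cyclic sequence of
translates of tiles of `T` in which consecutive tiles are adjacent and match
in color. -/
def AdmitsCycle {C : Type*} (T : Finset (WangTile C)) : Prop :=
  ∃ (n : ℕ) (a : ℕ → WangTile C) (p : ℕ → ℤ × ℤ),
    5 ≤ n ∧ (∀ i < n, a i ∈ T) ∧
    (∀ i < n - 1, ∀ j < n - 1, p i = p j → i = j) ∧
    p (n - 1) = p 0 ∧ a (n - 1) = a 0 ∧
    ∀ i < n - 1, WangMatch (a i) (a (i + 1)) (p (i + 1) - p i)

/-- The substitution `σ_T` built from a Wang tile set `T`: letters are tiles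
of `T` decorated with an arrow, the base rule sends every letter to a single
cell at the origin, and the concatenation rules correspond exactly to the
matching dominoes of tiles of `T` in which exactly one arrow points at the
other cell, the image of the pointing cell being placed immediately to the
left of the image of the pointed cell. -/
noncomputable def sigmaT {C : Type*} (T : Finset (WangTile C)) :
    Subst (WangTile C × Dir) (ℤ × ℤ) where
  base t := {((0, 0), t)}
  basePat := by
    intro t c hc c' hc' _
    rw [Finset.mem_singleton] at hc hc'
    rw [hc, hc']
  rule t t' u :=
    if t.1 ∈ T ∧ t'.1 ∈ T ∧ WangMatch t.1 t'.1 u ∧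
        dirVec t.2 = u ∧ dirVec t'.2 ≠ -u
    then some (1, 0) else none
  finiteRules := by
    apply Set.Finite.subset (Set.finite_range dirVec)
    rintro u ⟨t, t', h⟩
    try simp only at h
    split_ifs at h with hc
    · exact ⟨t.2, hc.2.2.2.1⟩
    · exact absurd rfl h
  det := by
    intro t t' u h1 h2
    try simp only at h1 h2
    split_ifs at h1 with hA
    · split_ifs at h2 with hB
      · exact hA.2.2.2.1.symm.trans hB.2.2.2.1
      · simp at h2
    · simp at h1


/-! ### Auxiliary lemmas -/

section WangAux

variable {C : Type*}

theorem wangMatch_cases {a b : WangTile C} {u : ℤ × ℤ} (h : WangMatch a b u) :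
    u = (1, 0) ∨ u = (-1, 0) ∨ u = (0, 1) ∨ u = (0, -1) := by
  rcases h with ⟨h, -⟩ | ⟨h, -⟩ | ⟨h, -⟩ | ⟨h, -⟩ <;> tauto

theorem wangMatch_symm {a b : WangTile C} {u : ℤ × ℤ} (h : WangMatch a b u) :
    WangMatch b a (-u) := by
  rcases h with ⟨rfl, h⟩ | ⟨rfl, h⟩ | ⟨rfl, h⟩ | ⟨rfl, h⟩
  · exact Or.inr (Or.inl ⟨by decide, h.symm⟩)
  · exact Or.inl ⟨by decide, h.symm⟩
  · exact Or.inr (Or.inr (Or.inr ⟨by decide, h.symm⟩))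
  · exact Or.inr (Or.inr (Or.inl ⟨by decide, h.symm⟩))

theorem wangMatch_odd {a b : WangTile C} {u : ℤ × ℤ} (h : WangMatch a b u) :
    Odd (u.1 + u.2) := by
  rcases wangMatch_cases h with rfl | rfl | rfl | rfl <;> decide

/-- A direction with the given unit vector. -/
def dirOf (u : ℤ × ℤ) : Dir :=
  if u = (1, 0) then .right else if u = (-1, 0) then .left
  else if u = (0, 1) then .up else .down

theorem dirVec_dirOf {u : ℤ × ℤ}
    (h : u = (1, 0) ∨ u = (-1, 0) ∨ u = (0, 1) ∨ u = (0, -1)) :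
    dirVec (dirOf u) = u := by
  rcases h with rfl | rfl | rfl | rfl <;> rfl

theorem dirVec_ne_zero (d : Dir) : dirVec d ≠ 0 := by cases d <;> decide

/-- The first cell points at the second one, in the substitution `sigmaT T`. -/
def Pts (T : Finset (WangTile C)) (c c' : (ℤ × ℤ) × (WangTile C × Dir)) : Prop :=
  c.2.1 ∈ T ∧ c'.2.1 ∈ T ∧ WangMatch c.2.1 c'.2.1 (c'.1 - c.1) ∧
    dirVec c.2.2 = c'.1 - c.1 ∧ dirVec c'.2.2 ≠ -(c'.1 - c.1)

theorem sigmaT_rule_eq (T : Finset (WangTile C)) (c c' : (ℤ × ℤ) × (WangTile C × Dir)) :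
    (sigmaT T).rule c.2 c'.2 (c'.1 - c.1) =
      if Pts T c c' then some (1, 0) else none := by
  by_cases h : Pts T c c'
  · rw [if_pos h]; exact if_pos h
  · rw [if_neg h]; exact if_neg h

theorem not_pts_both {T : Finset (WangTile C)} {c c' : (ℤ × ℤ) × (WangTile C × Dir)}
    (h : Pts T c c') (h' : Pts T c' c) : False :=
  h.2.2.2.2 (by rw [neg_sub]; exact h'.2.2.2.1)

theorem ruleVec_eq (T : Finset (WangTile C)) (c c' : (ℤ × ℤ) × (WangTile C × Dir)) :
    (sigmaT T).ruleVec c c' =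
      if Pts T c c' then some (1, 0)
      else if Pts T c' c then some (-(1, 0)) else none := by
  unfold Subst.ruleVec
  rw [sigmaT_rule_eq T c c', sigmaT_rule_eq T c' c]
  by_cases h1 : Pts T c c'
  · have h2 : ¬ Pts T c' c := fun h => not_pts_both h1 h
    simp [h1, h2]
  · by_cases h2 : Pts T c' c <;> simp [h1, h2]

theorem ruleVec_self (T : Finset (WangTile C)) (c : (ℤ × ℤ) × (WangTile C × Dir)) :
    (sigmaT T).ruleVec c c = none := by
  have h : ¬ Pts T c c := fun h => dirVec_ne_zero _ (by simpa using h.2.2.2.1)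
  rw [ruleVec_eq, if_neg h, if_neg h]

theorem ruleVec_symm (T : Finset (WangTile C)) (c c' : (ℤ × ℤ) × (WangTile C × Dir)) :
    (sigmaT T).ruleVec c' c = ((sigmaT T).ruleVec c c').map (fun v => -v) := by
  rw [ruleVec_eq, ruleVec_eq]
  by_cases h1 : Pts T c c'
  · have h2 : ¬ Pts T c' c := fun h => not_pts_both h1 h
    simp [h1, h2]
  · by_cases h2 : Pts T c' c <;> simp [h1, h2]

theorem ruleVec_isSome_iff (T : Finset (WangTile C)) (c c' : (ℤ × ℤ) × (WangTile C × Dir)) :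
    ((sigmaT T).ruleVec c c').isSome ↔ Pts T c c' ∨ Pts T c' c := by
  rw [ruleVec_eq]
  by_cases h1 : Pts T c c' <;> by_cases h2 : Pts T c' c <;> simp [h1, h2]

theorem isSome_facts {T : Finset (WangTile C)} {c c' : (ℤ × ℤ) × (WangTile C × Dir)}
    (h : ((sigmaT T).ruleVec c c').isSome) :
    c.2.1 ∈ T ∧ c'.2.1 ∈ T ∧ WangMatch c.2.1 c'.2.1 (c'.1 - c.1) := by
  rcases (ruleVec_isSome_iff T c c').1 h with h | h
  · exact ⟨h.1, h.2.1, h.2.2.1⟩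
  · refine ⟨h.2.1, h.1, ?_⟩
    have := wangMatch_symm h.2.2.1
    rwa [neg_sub] at this

/-- The weight of a step. -/
noncomputable def wgt (T : Finset (WangTile C)) (c c' : (ℤ × ℤ) × (WangTile C × Dir)) : ℤ × ℤ :=
  ((sigmaT T).ruleVec c c').getD 0

theorem wgt_symm (T : Finset (WangTile C)) (c c' : (ℤ × ℤ) × (WangTile C × Dir)) :
    wgt T c' c = - wgt T c c' := by
  unfold wgt
  rw [ruleVec_symm]
  cases (sigmaT T).ruleVec c c' <;> simp

theorem wgt_self (T : Finset (WangTile C)) (c : (ℤ × ℤ) × (WangTile C × Dir)) :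
    wgt T c c = 0 := by
  unfold wgt; rw [ruleVec_self]; rfl

end WangAux


section OmegaLemmas

variable {A V : Type*} [AddCommGroup V]

theorem omega_nil (σ : Subst A V) : σ.omega [] = 0 := rfl

theorem omega_singleton (σ : Subst A V) (a : V × A) : σ.omega [a] = 0 := rfl

theorem omega_cons_cons (σ : Subst A V) (a b : V × A) (l : List (V × A)) :
    σ.omega (a :: b :: l) = (σ.ruleVec a b).getD 0 + σ.omega (b :: l) := by
  simp [Subst.omega]

theorem omega_eq_sum (σ : Subst A V) (d₀ : V × A) :
    ∀ l : List (V × A), σ.omega l = ∑ i ∈ Finset.range (l.length - 1),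
      (σ.ruleVec (l.getD i d₀) (l.getD (i + 1) d₀)).getD 0
  | [] => by simp [omega_nil]
  | [a] => by simp [omega_singleton]
  | a :: b :: l => by
    rw [omega_cons_cons, omega_eq_sum σ d₀ (b :: l)]
    have h : (a :: b :: l).length - 1 = ((b :: l).length - 1) + 1 := by simp
    rw [h, Finset.sum_range_succ']
    simp only [List.getD_cons_succ, List.getD_cons_zero]
    exact (add_comm _ _)

theorem omega_append (σ : Subst A V) (l₁ l₂ : List (V × A)) :
    σ.omega (l₁ ++ l₂) = σ.omega l₁ + σ.omega l₂ +
      ((l₁.getLast?.bind fun a => l₂.head?.map fun b => (σ.ruleVec a b).getD 0).getD 0) := by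
  induction l₁ with
  | nil => simp [omega_nil]
  | cons a l₁ ih =>
    cases l₁ with
    | nil =>
      cases l₂ with
      | nil => simp [omega_nil, omega_singleton]
      | cons b l₂ =>
        rw [List.singleton_append, omega_cons_cons]
        simp [omega_singleton]
        abel
    | cons a' l₁ =>
      rw [List.cons_append, List.cons_append, omega_cons_cons, ← List.cons_append, ih,
        omega_cons_cons, List.getLast?_cons_cons]
      abel

theorem map_neg_getD (o : Option V) : (o.map (fun v => -v)).getD 0 = -(o.getD 0) := by
  cases o <;> simp

theorem omega_reverse {C : Type*} (T : Finset (WangTile C)) :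
    ∀ l : List ((ℤ × ℤ) × (WangTile C × Dir)),
      (sigmaT T).omega l.reverse = - (sigmaT T).omega l
  | [] => by simp [omega_nil]
  | [a] => by simp [omega_singleton]
  | a :: b :: l => by
    have ih := omega_reverse T (b :: l)
    rw [List.reverse_cons, omega_append, ih, omega_cons_cons, omega_singleton]
    have h1 : (b :: l).reverse.getLast? = some b := by
      rw [List.getLast?_reverse]; rfl
    rw [h1]
    have h2 : ((sigmaT T).ruleVec b a).getD 0 = -(((sigmaT T).ruleVec a b).getD 0) := by
      rw [ruleVec_symm, map_neg_getD]
    show -(sigmaT T).omega (b :: l) + 0 + ((sigmaT T).ruleVec b a).getD 0 = _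
    rw [h2]
    abel

end OmegaLemmas


section LoopToCycle

variable {C : Type*}

/-- Step relation allowing repeated cells. -/
def Rel' (T : Finset (WangTile C)) (c c' : (ℤ × ℤ) × (WangTile C × Dir)) : Prop :=
  ((sigmaT T).ruleVec c c').isSome ∨ c = c'

theorem cycle_of_loop (T : Finset (WangTile C))
    (P : Finset ((ℤ × ℤ) × (WangTile C × Dir))) (hP : IsPattern P) :
    ∀ m : ℕ, ∀ f : ℕ → (ℤ × ℤ) × (WangTile C × Dir),
      (∀ i, f i ∈ P) → (∀ i < m, Rel' T (f i) (f (i + 1))) → f m = f 0 →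
      (∑ i ∈ Finset.range m, wgt T (f i) (f (i + 1))) ≠ 0 → AdmitsCycle T := by
  intro m
  induction m using Nat.strong_induction_on with
  | _ m IH =>
  intro f hfP hstep hloop hsum
  have hcell : ∀ i j, (f i).1 = (f j).1 → f i = f j := fun i j h =>
    hP _ (hfP i) _ (hfP j) h
  have hm0 : m ≠ 0 := by rintro rfl; exact hsum (by simp)
  have hm1 : m ≠ 1 := by
    rintro rfl
    rw [Finset.sum_range_one, hloop, wgt_self] at hsum
    exact hsum rfl
  by_cases hsimp : ∀ i < m, ∀ j < m, (f i).1 = (f j).1 → i = j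
  · -- simple loop: produce a cycle directly
    have hm2 : m ≠ 2 := by
      rintro rfl
      rw [Finset.sum_range_succ, Finset.sum_range_one, hloop,
        wgt_symm T (f 0) (f 1)] at hsum
      simp at hsum
    have hstrict : ∀ i < m, ((sigmaT T).ruleVec (f i) (f (i + 1))).isSome := by
      intro i hi
      rcases hstep i hi with h | h
      · exact h
      · exfalso
        by_cases hi1 : i + 1 < m
        · have := hsimp i hi (i + 1) hi1 (congrArg Prod.fst h)
          omega
        · have hi1' : i + 1 = m := by omega
          have h0 : f i = f 0 := by rw [h, hi1', hloop]
          have := hsimp i hi 0 (by omega) (congrArg Prod.fst h0)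
          omega
    have hm3 : m ≠ 3 := by
      rintro rfl
      obtain ⟨k0, h0⟩ := wangMatch_odd (isSome_facts (hstrict 0 (by omega))).2.2
      obtain ⟨k1, h1⟩ := wangMatch_odd (isSome_facts (hstrict 1 (by omega))).2.2
      obtain ⟨k2, h2⟩ := wangMatch_odd (isSome_facts (hstrict 2 (by omega))).2.2
      have e1 : (f 3).1.1 = (f 0).1.1 := by rw [hloop]
      have e2 : (f 3).1.2 = (f 0).1.2 := by rw [hloop]
      simp only [Prod.fst_sub, Prod.snd_sub, Nat.reduceAdd] at h0 h1 h2
      omega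
    have hm4 : 4 ≤ m := by omega
    refine ⟨m + 1, fun i => (f i).2.1, fun i => (f i).1, by omega, ?_, ?_, ?_, ?_, ?_⟩
    · intro i hi
      show (f i).2.1 ∈ T
      by_cases h : i < m
      · exact (isSome_facts (hstrict i h)).1
      · have hi' : i = m := by omega
        rw [hi', hloop]
        exact (isSome_facts (hstrict 0 (by omega))).1
    · intro i hi j hj h
      exact hsimp i (by omega) j (by omega) h
    · show (f (m + 1 - 1)).1 = (f 0).1
      rw [Nat.add_sub_cancel, hloop]
    · show (f (m + 1 - 1)).2.1 = (f 0).2.1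
      rw [Nat.add_sub_cancel, hloop]
    · intro i hi
      have hi' : i < m := by omega
      show WangMatch (f i).2.1 (f (i + 1)).2.1 ((f (i + 1)).1 - (f i).1)
      exact (isSome_facts (hstrict i hi')).2.2
  · -- a repeated position: split the loop
    push_neg at hsimp
    obtain ⟨i0, hi0, j0, hj0, hfe0, hne0⟩ := hsimp
    have hex : ∃ i j, i < j ∧ j < m ∧ (f i).1 = (f j).1 := by
      rcases lt_or_gt_of_ne hne0 with h | h
      · exact ⟨i0, j0, h, hj0, hfe0⟩
      · exact ⟨j0, i0, h, hi0, hfe0.symm⟩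
    obtain ⟨i, j, hij, hjm, hfe⟩ := hex
    have hfij : f i = f j := hcell _ _ hfe
    set F : ℕ → ℤ × ℤ := fun k => wgt T (f k) (f (k + 1)) with hF
    -- inner loop sum
    have hinner_sum : ∑ k ∈ Finset.range (j - i),
        wgt T (f (i + k)) (f (i + k + 1)) = ∑ k ∈ Finset.Ico i j, F k := by
      rw [Finset.sum_Ico_eq_sum_range]
    -- the outer function
    set h : ℕ → (ℤ × ℤ) × (WangTile C × Dir) :=
      fun k => if k ≤ i then f k else f (k + (j - i)) with hh
    have hm₂i : i < m - (j - i) := by omega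
    have houter_sum : ∑ k ∈ Finset.range (m - (j - i)), wgt T (h k) (h (k + 1)) =
        (∑ k ∈ Finset.range i, F k) + F j + ∑ k ∈ Finset.Ico (j + 1) m, F k := by
      rw [Finset.range_eq_Ico,
        ← Finset.sum_Ico_consecutive _ (Nat.zero_le (i + 1)) (show i + 1 ≤ m - (j - i) by omega),
        Finset.sum_Ico_succ_top (Nat.zero_le i)]
      have e1 : ∑ k ∈ Finset.Ico 0 i, wgt T (h k) (h (k + 1)) = ∑ k ∈ Finset.range i, F k := by
        rw [← Finset.range_eq_Ico]
        refine Finset.sum_congr rfl fun k hk => ?_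
        rw [Finset.mem_range] at hk
        have hk1 : k ≤ i := by omega
        have hk2 : k + 1 ≤ i := by omega
        have k1 : h k = f k := by simp [hh, hk1]
        have k2 : h (k + 1) = f (k + 1) := by simp [hh, hk2]
        rw [k1, k2]
      have e2 : wgt T (h i) (h (i + 1)) = F j := by
        have k1 : h i = f j := by simp [hh, hfij]
        have k2 : h (i + 1) = f (j + 1) := by
          have : ¬ i + 1 ≤ i := by omega
          simp only [hh, if_neg this]
          congr 1
          omega
        rw [k1, k2]
      have e3 : ∑ k ∈ Finset.Ico (i + 1) (m - (j - i)), wgt T (h k) (h (k + 1)) =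
          ∑ k ∈ Finset.Ico (j + 1) m, F k := by
        rw [Finset.sum_Ico_eq_sum_range, Finset.sum_Ico_eq_sum_range]
        have hlen : m - (j - i) - (i + 1) = m - (j + 1) := by omega
        rw [hlen]
        refine Finset.sum_congr rfl fun k hk => ?_
        have k1 : h (i + 1 + k) = f (j + 1 + k) := by
          have : ¬ i + 1 + k ≤ i := by omega
          simp only [hh, if_neg this]
          congr 1
          omega
        have k2 : h (i + 1 + k + 1) = f (j + 1 + k + 1) := by
          have : ¬ i + 1 + k + 1 ≤ i := by omega
          simp only [hh, if_neg this]
          congr 1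
          omega
        rw [k1, k2]
      rw [e1, e2, e3, Finset.range_eq_Ico]
    have htotal : ∑ k ∈ Finset.range m, F k =
        (∑ k ∈ Finset.range i, F k) + (∑ k ∈ Finset.Ico i j, F k) +
          (F j + ∑ k ∈ Finset.Ico (j + 1) m, F k) := by
      have h1 := Finset.sum_Ico_consecutive F (Nat.zero_le i) (show i ≤ m by omega)
      have h2 := Finset.sum_Ico_consecutive F (show i ≤ j by omega) (show j ≤ m by omega)
      have h3 := Finset.sum_eq_sum_Ico_succ_bot hjm F
      rw [Finset.range_eq_Ico, ← h1, ← h2, h3, ← Finset.range_eq_Ico]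
      abel
    by_cases hz : ∑ k ∈ Finset.range (j - i), wgt T (f (i + k)) (f (i + k + 1)) = 0
    · -- outer loop carries the weight
      refine IH (m - (j - i)) (by omega) h (fun k => ?_) ?_ ?_ ?_
      · by_cases hk : k ≤ i <;> simp [hh, hk, hfP]
      · intro k hk
        by_cases hk1 : k + 1 ≤ i
        · have hk0 : k ≤ i := by omega
          have k1 : h k = f k := by simp [hh, hk0]
          have k2 : h (k + 1) = f (k + 1) := by simp [hh, hk1]
          rw [k1, k2]
          exact hstep k (by omega)
        · by_cases hk2 : k ≤ i
          · have hki : k = i := by omega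
            have k1 : h k = f j := by simp [hh, hki, hfij]
            have k2 : h (k + 1) = f (j + 1) := by
              simp only [hh, if_neg hk1]
              congr 1
              omega
            rw [k1, k2]
            exact hstep j hjm
          · have k1 : h k = f (k + (j - i)) := by simp [hh, hk2]
            have k2 : h (k + 1) = f (k + (j - i) + 1) := by
              have : ¬ k + 1 ≤ i := by omega
              simp only [hh, if_neg this]
              congr 1
              omega
            rw [k1, k2]
            exact hstep (k + (j - i)) (by omega)
      · have k1 : h (m - (j - i)) = f m := by
          have : ¬ m - (j - i) ≤ i := by omega
          simp only [hh, if_neg this]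
          congr 1
          omega
        have k2 : h 0 = f 0 := by simp [hh]
        rw [k1, k2, hloop]
      · rw [houter_sum]
        intro hc
        apply hsum
        rw [htotal]
        rw [hinner_sum] at hz
        rw [hz]
        rw [show (∑ k ∈ Finset.range i, F k) + 0 + (F j + ∑ k ∈ Finset.Ico (j + 1) m, F k) =
          (∑ k ∈ Finset.range i, F k) + F j + ∑ k ∈ Finset.Ico (j + 1) m, F k by abel]
        exact hc
    · -- inner loop carries the weight
      refine IH (j - i) (by omega) (fun k => f (i + k)) (fun k => hfP _) ?_ ?_ hz
      · intro k hk
        exact hstep (i + k) (by omega)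
      · show f (i + (j - i)) = f (i + 0)
        rw [show i + (j - i) = j by omega, ← hfij, Nat.add_zero]

end LoopToCycle


section Backward

variable {C : Type*}

theorem rel'_symm {T : Finset (WangTile C)} {c c' : (ℤ × ℤ) × (WangTile C × Dir)}
    (h : Rel' T c c') : Rel' T c' c := by
  rcases h with h | h
  · left
    rw [ruleVec_symm]
    simpa using h
  · exact Or.inr h.symm

theorem not_consistent_admitsCycle (T : Finset (WangTile C))
    (h : ¬ (sigmaT T).Consistent) : AdmitsCycle T := by
  rw [Subst.Consistent] at h
  push_neg at h
  obtain ⟨P, hP, -, hnc⟩ := h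
  rw [Subst.ConsistentOn] at hnc
  push_neg at hnc
  obtain ⟨γ, γ', hγ, hγ', hhead, hlast, hne⟩ := hnc
  have hγne : γ ≠ [] := hγ.1.1
  have hγ'ne : γ' ≠ [] := hγ'.1.1
  set δ : List ((ℤ × ℤ) × (WangTile C × Dir)) := γ ++ γ'.reverse with hδ
  have hδne : δ ≠ [] := by
    simp [hδ, hγne]
  have hδP : ∀ c ∈ δ, c ∈ P := by
    intro c hc
    rw [hδ, List.mem_append, List.mem_reverse] at hc
    rcases hc with hc | hc
    · exact hγ.2 c hc
    · exact hγ'.2 c hc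
  obtain ⟨x, hx⟩ : ∃ x, γ.getLast? = some x := by
    cases hγl : γ.getLast? with
    | none => exact absurd (List.getLast?_eq_none_iff.mp hγl) hγne
    | some x => exact ⟨x, rfl⟩
  have hrevhead : γ'.reverse.head? = some x := by
    rw [List.head?_reverse, ← hlast, hx]
  have hchain : δ.Chain' (Rel' T) := by
    unfold List.Chain'
    rw [hδ, List.isChain_append]
    refine ⟨hγ.1.2.1.imp fun a b hab => Or.inl hab, ?_, ?_⟩
    · rw [List.isChain_reverse]
      exact hγ'.1.2.1.imp fun a b hab => rel'_symm (Or.inl hab)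
    · intro u hu v hv
      rw [hx] at hu
      rw [hrevhead] at hv
      rw [Option.mem_def, Option.some_inj] at hu hv
      rw [← hu, ← hv]
      exact Or.inr rfl
  have homega : (sigmaT T).omega δ = (sigmaT T).omega γ - (sigmaT T).omega γ' := by
    rw [hδ, omega_append, omega_reverse, hx, hrevhead]
    simp [ruleVec_self]
    abel
  have homega_ne : (sigmaT T).omega δ ≠ 0 := by
    rw [homega]
    exact sub_ne_zero.mpr hne
  have hhl : δ.head? = δ.getLast? := by
    rw [hδ, List.head?_append, List.getLast?_append, List.getLast?_reverse, ← hhead]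
    cases hγh : γ.head? with
    | none => exact absurd (List.head?_eq_none_iff.mp hγh) hγne
    | some y => rfl
  set d₀ := γ.head hγne with hd₀
  refine cycle_of_loop T P hP (δ.length - 1) (fun i => δ.getD i d₀) ?_ ?_ ?_ ?_
  · intro i
    show δ.getD i d₀ ∈ P
    by_cases hi : i < δ.length
    · rw [List.getD_eq_getElem δ d₀ hi]
      exact hδP _ (List.getElem_mem hi)
    · rw [List.getD_eq_default δ d₀ (by omega)]
      exact hγ.2 _ (List.head_mem hγne)
  · intro i hi
    show Rel' T (δ.getD i d₀) (δ.getD (i + 1) d₀)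
    have := List.isChain_iff_getElem.1 hchain i (by omega)
    rw [List.getD_eq_getElem δ d₀ (by omega), List.getD_eq_getElem δ d₀ (by omega)]
    exact this
  · have hlen : 0 < δ.length := List.length_pos_iff.mpr hδne
    show δ.getD (δ.length - 1) d₀ = δ.getD 0 d₀
    rw [List.getD_eq_getElem δ d₀ (by omega), List.getD_eq_getElem δ d₀ (by omega)]
    have h1 : δ.head? = some δ[0] := by
      rw [List.head?_eq_getElem?, List.getElem?_eq_getElem hlen]
    have h2 : δ.getLast? = some δ[δ.length - 1] := by
      rw [List.getLast?_eq_getElem?, List.getElem?_eq_getElem (by omega)]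
    rw [h1, h2] at hhl
    exact (Option.some_inj.mp hhl).symm
  · have := omega_eq_sum (sigmaT T) d₀ δ
    show (∑ i ∈ Finset.range (δ.length - 1), wgt T (δ.getD i d₀) (δ.getD (i + 1) d₀)) ≠ 0
    intro hc
    apply homega_ne
    rw [this]
    exact hc

end Backward


section Forward

variable {C : Type*}

theorem pts_ruleVec {T : Finset (WangTile C)} {x y : (ℤ × ℤ) × (WangTile C × Dir)}
    (h : Pts T x y) : (sigmaT T).ruleVec x y = some ((1 : ℤ), (0 : ℤ)) := by
  rw [ruleVec_eq, if_pos h]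

theorem pts_isSome {T : Finset (WangTile C)} {x y : (ℤ × ℤ) × (WangTile C × Dir)}
    (h : Pts T x y) : ((sigmaT T).ruleVec x y).isSome := by
  rw [pts_ruleVec h]; rfl

theorem head?_map_range' {α : Type*} (f : ℕ → α) (s n : ℕ) (hn : 0 < n) :
    ((List.range' s n).map f).head? = some (f s) := by
  cases n with
  | zero => omega
  | succ n => rw [List.range'_succ]; rfl

theorem getLast?_map_range' {α : Type*} (f : ℕ → α) (n s : ℕ) (hn : 0 < n) :
    ((List.range' s n).map f).getLast? = some (f (s + n - 1)) := by
  cases n with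
  | zero => omega
  | succ n =>
    rw [List.range'_concat, List.map_append, List.map_singleton, List.getLast?_concat,
      show s + 1 * n = s + (n + 1) - 1 by omega]

theorem chain'_map_range' {α : Type*} (R : α → α → Prop) (f : ℕ → α) (s n : ℕ)
    (h : ∀ k, s ≤ k → k + 1 < s + n → R (f k) (f (k + 1))) :
    ((List.range' s n).map f).Chain' R := by
  unfold List.Chain'
  rw [List.isChain_map, List.isChain_iff_getElem]
  intro i hi
  simp only [List.length_range'] at hi
  rw [List.getElem_range'_1, List.getElem_range'_1]
  exact h (s + i) (by omega) (by omega)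

theorem isPathOf_reverse {T : Finset (WangTile C)}
    {P : Finset ((ℤ × ℤ) × (WangTile C × Dir))} {γ : List ((ℤ × ℤ) × (WangTile C × Dir))}
    (h : (sigmaT T).IsPathOf P γ) : (sigmaT T).IsPathOf P γ.reverse := by
  obtain ⟨⟨hne, hch, hinj⟩, hmem⟩ := h
  refine ⟨⟨by simpa using hne, ?_, ?_⟩, ?_⟩
  · unfold List.Chain'
    rw [List.isChain_reverse]
    refine hch.imp fun a b hab => ?_
    show ((sigmaT T).ruleVec b a).isSome
    rw [ruleVec_symm]
    simpa using hab
  · intro x hx y hy hxy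
    rw [List.mem_reverse] at hx hy
    exact hinj x hx y hy hxy
  · intro x hx
    rw [List.mem_reverse] at hx
    exact hmem x hx

theorem admitsCycle_not_consistent (T : Finset (WangTile C)) (hA : AdmitsCycle T) :
    ¬ (sigmaT T).Consistent := by
  obtain ⟨n, a, p, hn5, haT, hpinj, hpcyc, hacyc, hmatch⟩ := hA
  set m := n - 1 with hm
  have hm4 : 4 ≤ m := by omega
  set F : ℕ → (ℤ × ℤ) × (WangTile C × Dir) :=
    fun k => (p k, (a k, dirOf (p (k + 1) - p k))) with hF
  have hunit : ∀ k, k < m → dirVec (dirOf (p (k + 1) - p k)) = p (k + 1) - p k := fun k hk =>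
    dirVec_dirOf (wangMatch_cases (hmatch k hk))
  have hstepF : ∀ k, k < m → Pts T (F k) (F ((k + 1) % m)) := by
    intro k hk
    by_cases hk1 : k + 1 < m
    · rw [Nat.mod_eq_of_lt hk1]
      refine ⟨haT k (by omega), haT (k + 1) (by omega), ?_, ?_, ?_⟩
      · show WangMatch (a k) (a (k + 1)) (p (k + 1) - p k)
        exact hmatch k hk
      · show dirVec (dirOf (p (k + 1) - p k)) = p (k + 1) - p k
        exact hunit k hk
      · show dirVec (dirOf (p (k + 1 + 1) - p (k + 1))) ≠ -(p (k + 1) - p k)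
        rw [hunit (k + 1) hk1, neg_sub]
        intro heq
        have h2 : p (k + 1 + 1) = p k := by
          have := sub_left_inj.mp heq
          exact this
        by_cases hk2 : k + 2 < m
        · have := hpinj (k + 1 + 1) (by omega) k (by omega) h2
          omega
        · have hk2' : k + 1 + 1 = m := by omega
          rw [hk2', hpcyc] at h2
          have := hpinj 0 (by omega) k (by omega) h2
          omega
    · have hkm : k + 1 = m := by omega
      rw [hkm, Nat.mod_self]
      refine ⟨haT k (by omega), haT 0 (by omega), ?_, ?_, ?_⟩
      · show WangMatch (a k) (a 0) (p 0 - p k)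
        have h1 := hmatch k hk
        rw [hkm, hacyc, hpcyc] at h1
        exact h1
      · show dirVec (dirOf (p (k + 1) - p k)) = p 0 - p k
        have h1 := hunit k hk
        rw [hkm, hpcyc] at h1
        rw [hkm, hpcyc]
        exact h1
      · show dirVec (dirOf (p (0 + 1) - p 0)) ≠ -(p 0 - p k)
        rw [hunit 0 (by omega), neg_sub]
        intro heq
        have h2 : p (0 + 1) = p k := sub_left_inj.mp heq
        have := hpinj (0 + 1) (by omega) k (by omega) h2
        omega
  set c : ℕ → (ℤ × ℤ) × (WangTile C × Dir) := fun i => F (i % m) with hc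
  have hstepc : ∀ i, i < m → Pts T (c i) (c (i + 1)) := by
    intro i hi
    show Pts T (F (i % m)) (F ((i + 1) % m))
    rw [Nat.mod_eq_of_lt hi]
    exact hstepF i hi
  set γ₂ := (List.range' 0 n).map c with hγ₂
  set P := γ₂.toFinset with hPdef
  have hmemP : ∀ x, x ∈ P ↔ x ∈ γ₂ := fun x => List.mem_toFinset
  have hcF : ∀ k, k < m → c k = F k := by
    intro k hk
    show F (k % m) = F k
    rw [Nat.mod_eq_of_lt hk]
  have hFmem : ∀ k, k < m → F k ∈ γ₂ := by
    intro k hk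
    rw [hγ₂, List.mem_map]
    exact ⟨k, by rw [List.mem_range'_1]; omega, hcF k hk⟩
  have hvecinj : ∀ x ∈ γ₂, ∀ y ∈ γ₂, x.1 = y.1 → x = y := by
    intro x hx y hy hxy
    rw [hγ₂, List.mem_map] at hx hy
    obtain ⟨i, hi, rfl⟩ := hx
    obtain ⟨j, hj, rfl⟩ := hy
    have hxy' : p (i % m) = p (j % m) := hxy
    have := hpinj (i % m) (Nat.mod_lt _ (by omega)) (j % m) (Nat.mod_lt _ (by omega)) hxy'
    show F (i % m) = F (j % m)
    rw [this]
  have hPat : IsPattern P := by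
    intro x hx y hy hxy
    exact hvecinj x ((hmemP x).mp hx) y ((hmemP y).mp hy) hxy
  -- the straight paths
  have hpath : ∀ i' j', i' ≤ j' → j' < m →
      ∃ γ, (sigmaT T).IsPathOf P γ ∧ γ.head? = some (F i') ∧ γ.getLast? = some (F j') := by
    intro i' j' hij hjm
    refine ⟨(List.range' i' (j' - i' + 1)).map F, ⟨⟨?_, ?_, ?_⟩, ?_⟩, ?_, ?_⟩
    · simp
    · refine chain'_map_range' _ F i' (j' - i' + 1) fun k hk1 hk2 => ?_
      have h1 := hstepF k (by omega)
      rw [Nat.mod_eq_of_lt (by omega)] at h1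
      exact pts_isSome h1
    · intro x hx y hy hxy
      rw [List.mem_map] at hx hy
      obtain ⟨k, hk, rfl⟩ := hx
      obtain ⟨l, hl, rfl⟩ := hy
      rw [List.mem_range'_1] at hk hl
      exact hvecinj _ (hFmem k (by omega)) _ (hFmem l (by omega)) hxy
    · intro x hx
      rw [List.mem_map] at hx
      obtain ⟨k, hk, rfl⟩ := hx
      rw [List.mem_range'_1] at hk
      exact (hmemP _).mpr (hFmem k (by omega))
    · exact head?_map_range' F i' (j' - i' + 1) (by omega)
    · rw [getLast?_map_range' F (j' - i' + 1) i' (by omega),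
        show i' + (j' - i' + 1) - 1 = j' by omega]
  have hCov : (sigmaT T).Covered P := by
    intro x hx y hy
    rw [hmemP, hγ₂, List.mem_map] at hx hy
    obtain ⟨i, hi, rfl⟩ := hx
    obtain ⟨j, hj, rfl⟩ := hy
    have hxF : c i = F (i % m) := rfl
    have hyF : c j = F (j % m) := rfl
    have him : i % m < m := Nat.mod_lt _ (by omega)
    have hjm : j % m < m := Nat.mod_lt _ (by omega)
    rcases le_or_gt (i % m) (j % m) with hle | hlt
    · obtain ⟨γ, h1, h2, h3⟩ := hpath (i % m) (j % m) hle hjm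
      exact ⟨γ, h1, by rw [h2, hxF], by rw [h3, hyF]⟩
    · obtain ⟨γ, h1, h2, h3⟩ := hpath (j % m) (i % m) (le_of_lt hlt) him
      refine ⟨γ.reverse, isPathOf_reverse h1, ?_, ?_⟩
      · rw [List.head?_reverse, h3, hxF]
      · rw [List.getLast?_reverse, h2, hyF]
  -- the two paths with equal endpoints and distinct image vectors
  intro hcons
  have hc0 : c 0 ∈ P := (hmemP _).mpr (by
    rw [hγ₂, List.mem_map]
    exact ⟨0, by rw [List.mem_range'_1]; omega, rfl⟩)
  have hpath1 : (sigmaT T).IsPathOf P [c 0] := by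
    refine ⟨⟨by simp, List.isChain_singleton _, ?_⟩, ?_⟩
    · intro x hx y hy _
      rw [List.mem_singleton] at hx hy
      rw [hx, hy]
    · intro x hx
      rw [List.mem_singleton] at hx
      rw [hx]
      exact hc0
  have hpath2 : (sigmaT T).IsPathOf P γ₂ := by
    refine ⟨⟨by simp [hγ₂]; omega, ?_, hvecinj⟩, fun x hx => (hmemP x).mpr hx⟩
    rw [hγ₂]
    refine chain'_map_range' _ c 0 n fun k hk1 hk2 => ?_
    exact pts_isSome (hstepc k (by omega))
  have hh : ([c 0] : List _).head? = γ₂.head? := by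
    rw [hγ₂, head?_map_range' c 0 n (by omega)]
    rfl
  have hcn : c (n - 1) = c 0 := by
    show F ((n - 1) % m) = F (0 % m)
    rw [show n - 1 = m from rfl, Nat.mod_self, Nat.zero_mod]
  have hl : ([c 0] : List _).getLast? = γ₂.getLast? := by
    rw [hγ₂, getLast?_map_range' c n 0 (by omega), show 0 + n - 1 = n - 1 by omega, hcn]
    rfl
  have heq := hcons P hPat hCov [c 0] γ₂ hpath1 hpath2 hh hl
  have hlen2 : γ₂.length = n := by simp [hγ₂]
  have hgetd : ∀ i, i < n → γ₂.getD i (c 0) = c i := by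
    intro i hi
    rw [hγ₂, List.getD_eq_getElem _ _ (by simpa using hi), List.getElem_map,
      List.getElem_range'_1]
    rw [Nat.zero_add]
  have homega2 : (sigmaT T).omega γ₂ = ∑ _i ∈ Finset.range (n - 1), ((1 : ℤ), (0 : ℤ)) := by
    rw [omega_eq_sum (sigmaT T) (c 0) γ₂, hlen2]
    refine Finset.sum_congr rfl fun i hi => ?_
    rw [Finset.mem_range] at hi
    rw [hgetd i (by omega), hgetd (i + 1) (by omega), pts_ruleVec (hstepc i (by omega))]
    rfl
  rw [omega_singleton, homega2, Finset.sum_const, Finset.card_range] at heq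
  have : ((0 : ℤ × ℤ)).1 = ((n - 1 : ℕ) • ((1 : ℤ), (0 : ℤ))).1 := by rw [heq]
  rw [Prod.smul_fst] at this
  simp only [Prod.fst_zero, nsmul_eq_mul, mul_one] at this
  omega

end Forward

/-- Theorem `undcons`, reduction.  A finite Wang tile set
`T` admits a valid tiling of a cycle if and only if the substitution `σ_T`
is not consistent. -/
theorem admitsCycle_iff_not_consistent {C : Type*} (T : Finset (WangTile C)) :
    AdmitsCycle T ↔ ¬ (sigmaT T).Consistent :=
  ⟨admitsCycle_not_consistent T, not_consistent_admitsCycle T⟩
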